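/- arXiv:0906.3750 — 2 statements merged into one kernel-verified Lean document; each statement's English description precedes it below -/
import Mathlib

section
/- Let K be a nontrivially normed field which is a proper metric space (equivalently, locally compact; these are exactly the local fields), Γ a finitely generated group, n : ℕ, and ρ : Γ →* GL_n(K) a group homomorphism. Then there exist a semisimple group homomorphism σ : Γ →* GL_n(K) and a sequence (g_k) in GL_n(K) such that for every γ ∈ Γ, the matrices g_k · ρ(γ) · g_k⁻¹ converge entrywise to σ(γ); that is, the closure of the conjugation orbit of ρ contains a semisimple representation. -/
open Filter Topology
open scoped Matrix

section Aux

variable {K : Type*} [Field K] {V : Type*} [AddCommGroup V] [Module K V]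
variable {ι : Type*}

/-- invariance of a submodule under a family of endomorphisms -/
def IsInvt (f : ι → Module.End K V) (W : Submodule K V) : Prop :=
  ∀ i, ∀ w ∈ W, f i w ∈ W

variable (f : ι → Module.End K V)

lemma isInvt_top : IsInvt f ⊤ := fun _ _ _ => trivial

lemma isInvt_bot : IsInvt f ⊥ := by
  intro i w hw
  rw [Submodule.mem_bot] at hw ⊢
  simp [hw]

lemma IsInvt.sup {A B : Submodule K V} (hA : IsInvt f A) (hB : IsInvt f B) :
    IsInvt f (A ⊔ B) := by
  intro i w hw
  rcases Submodule.mem_sup.1 hw with ⟨a, ha, b, hb, rfl⟩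
  rw [map_add]
  exact Submodule.add_mem_sup (hA i a ha) (hB i b hb)

lemma IsInvt.inf {A B : Submodule K V} (hA : IsInvt f A) (hB : IsInvt f B) :
    IsInvt f (A ⊓ B) := fun i w hw => ⟨hA i w hw.1, hB i w hw.2⟩

open Module in
lemma exists_min_invt [FiniteDimensional K V] (A : Submodule K V) (hA : A ≠ ⊤) :
    ∃ B, IsInvt f B ∧ A < B ∧ ∀ X, IsInvt f X → A < X → X ≤ B → X = B := by
  classical
  have hp : ∃ d, ∃ B : Submodule K V, (IsInvt f B ∧ A < B) ∧ finrank K B = d :=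
    ⟨finrank K (⊤ : Submodule K V), ⊤, ⟨isInvt_top f, lt_top_iff_ne_top.2 hA⟩, rfl⟩
  obtain ⟨B, hB, hBd⟩ := Nat.find_spec hp
  refine ⟨B, hB.1, hB.2, fun X hX hAX hXB => ?_⟩
  refine Submodule.eq_of_le_of_finrank_le hXB ?_
  rw [hBd]
  exact Nat.find_min' hp ⟨X, ⟨hX, hAX⟩, rfl⟩

open Classical in
noncomputable def nextSub (A : Submodule K V) : Submodule K V :=
  if h : ∃ B, IsInvt f B ∧ A < B ∧ ∀ X, IsInvt f X → A < X → X ≤ B → X = B then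
    h.choose else ⊤

open Classical in
lemma nextSub_le (A : Submodule K V) : A ≤ nextSub f A := by
  rw [nextSub]; split_ifs with h
  · exact h.choose_spec.2.1.le
  · exact le_top

open Classical in
lemma nextSub_invt (A : Submodule K V) : IsInvt f (nextSub f A) := by
  rw [nextSub]; split_ifs with h
  · exact h.choose_spec.1
  · exact isInvt_top f

open Classical in
lemma nextSub_lt [FiniteDimensional K V] {A : Submodule K V} (hA : A ≠ ⊤) :
    A < nextSub f A := by
  rw [nextSub, dif_pos (exists_min_invt f A hA)]
  exact (exists_min_invt f A hA).choose_spec.2.1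

open Classical in
lemma nextSub_min [FiniteDimensional K V] {A : Submodule K V} (hA : A ≠ ⊤) :
    ∀ X, IsInvt f X → A < X → X ≤ nextSub f A → X = nextSub f A := by
  rw [nextSub, dif_pos (exists_min_invt f A hA)]
  exact (exists_min_invt f A hA).choose_spec.2.2

noncomputable def chainU (ℓ : ℕ) : Submodule K V := (nextSub f)^[ℓ] ⊥

lemma chainU_zero : chainU f 0 = ⊥ := rfl

lemma chainU_succ (ℓ : ℕ) : chainU f (ℓ + 1) = nextSub f (chainU f ℓ) := by
  rw [chainU, Function.iterate_succ_apply', chainU]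

lemma chainU_invt (ℓ : ℕ) : IsInvt f (chainU f ℓ) := by
  cases ℓ with
  | zero => exact isInvt_bot f
  | succ ℓ => rw [chainU_succ]; exact nextSub_invt f _

lemma chainU_le_succ (ℓ : ℕ) : chainU f ℓ ≤ chainU f (ℓ + 1) := by
  rw [chainU_succ]; exact nextSub_le f _

lemma chainU_mono : Monotone (chainU f) :=
  monotone_nat_of_le_succ (chainU_le_succ f)

open Module in
lemma chainU_top [FiniteDimensional K V] : chainU f (finrank K V) = ⊤ := by
  have key : ∀ ℓ : ℕ, chainU f ℓ = ⊤ ∨ ℓ ≤ finrank K (chainU f ℓ) := by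
    intro ℓ
    induction ℓ with
    | zero => exact Or.inr (Nat.zero_le _)
    | succ ℓ ih =>
      by_cases h : chainU f ℓ = ⊤
      · left
        have := chainU_le_succ f ℓ
        rw [h] at this
        exact top_unique this
      · rcases ih with ih | ih
        · exact absurd ih h
        · right
          have hlt : chainU f ℓ < chainU f (ℓ + 1) := by
            rw [chainU_succ]; exact nextSub_lt f h
          have := Submodule.finrank_lt_finrank_of_lt hlt
          omega
  rcases key (finrank K V) with h | h
  · exact h
  · by_contra h'
    have : chainU f (finrank K V) < ⊤ := lt_top_iff_ne_top.2 h'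
    have := Submodule.finrank_lt this.ne
    omega

lemma exists_relCompl (A B : Submodule K V) :
    ∃ C, C ≤ B ∧ Disjoint (A ⊓ B) C ∧ (A ⊓ B) ⊔ C = B := by
  obtain ⟨C', hC'⟩ := Submodule.exists_isCompl ((A ⊓ B).comap B.subtype)
  have hmapAB : Submodule.map B.subtype ((A ⊓ B).comap B.subtype) = A ⊓ B := by
    rw [Submodule.map_comap_subtype]
    exact inf_eq_right.2 inf_le_right
  refine ⟨C'.map B.subtype, Submodule.map_subtype_le _ _, ?_, ?_⟩
  · rw [disjoint_iff, ← hmapAB,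
      ← Submodule.map_inf _ (Submodule.injective_subtype B), disjoint_iff.1 hC'.1,
      Submodule.map_bot]
  · rw [← hmapAB, ← Submodule.map_sup, codisjoint_iff.1 hC'.2, Submodule.map_subtype_top]


noncomputable def chainD : ℕ → Submodule K V
  | 0 => ⊤
  | (ℓ + 1) => (exists_relCompl (chainU f (ℓ + 1)) (chainD ℓ)).choose

lemma chainD_zero : chainD f 0 = ⊤ := rfl

lemma chainD_succ_le (ℓ : ℕ) : chainD f (ℓ + 1) ≤ chainD f ℓ :=
  (exists_relCompl (chainU f (ℓ + 1)) (chainD f ℓ)).choose_spec.1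

lemma chainD_succ_disjoint (ℓ : ℕ) :
    Disjoint (chainU f (ℓ + 1) ⊓ chainD f ℓ) (chainD f (ℓ + 1)) :=
  (exists_relCompl (chainU f (ℓ + 1)) (chainD f ℓ)).choose_spec.2.1

lemma chainD_succ_sup (ℓ : ℕ) :
    (chainU f (ℓ + 1) ⊓ chainD f ℓ) ⊔ chainD f (ℓ + 1) = chainD f ℓ :=
  (exists_relCompl (chainU f (ℓ + 1)) (chainD f ℓ)).choose_spec.2.2

lemma chainD_anti : Antitone (chainD f) :=
  antitone_nat_of_succ_le (chainD_succ_le f)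

lemma chainD_isCompl (ℓ : ℕ) : IsCompl (chainU f ℓ) (chainD f ℓ) := by
  induction ℓ with
  | zero => rw [chainU_zero, chainD_zero]; exact isCompl_bot_top
  | succ ℓ ih =>
    constructor
    · rw [disjoint_iff]
      rw [Submodule.eq_bot_iff]
      intro x hx
      have hxD : x ∈ chainD f ℓ := chainD_succ_le f ℓ hx.2
      exact (Submodule.disjoint_def.1 (chainD_succ_disjoint f ℓ)) x ⟨hx.1, hxD⟩ hx.2
    · rw [codisjoint_iff]
      have h1 : chainD f ℓ ≤ chainU f (ℓ + 1) ⊔ chainD f (ℓ + 1) := by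
        rw [← chainD_succ_sup f ℓ]
        exact sup_le (le_trans inf_le_left le_sup_left) le_sup_right
      have h2 : chainU f ℓ ⊔ chainD f ℓ ≤ chainU f (ℓ + 1) ⊔ chainD f (ℓ + 1) :=
        sup_le (le_trans (chainU_le_succ f ℓ) le_sup_left) h1
      rw [codisjoint_iff.1 ih.2] at h2
      exact top_unique h2

noncomputable def projP (ℓ : ℕ) : Module.End K V :=
  (chainU f ℓ).subtype ∘ₗ
    (chainU f ℓ).linearProjOfIsCompl (chainD f ℓ) (chainD_isCompl f ℓ)

lemma projP_mem (ℓ : ℕ) (x : V) : projP f ℓ x ∈ chainU f ℓ :=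
  SetLike.coe_mem _

lemma projP_left {ℓ : ℕ} {x : V} (hx : x ∈ chainU f ℓ) : projP f ℓ x = x :=
  congrArg Subtype.val
    (Submodule.linearProjOfIsCompl_apply_left (chainD_isCompl f ℓ) ⟨x, hx⟩)

lemma projP_right {ℓ : ℕ} {x : V} (hx : x ∈ chainD f ℓ) : projP f ℓ x = 0 := by
  have := Submodule.linearProjOfIsCompl_apply_right (chainD_isCompl f ℓ) ⟨x, hx⟩
  rw [projP]
  exact congrArg Subtype.val this

lemma projP_sub_mem (ℓ : ℕ) (x : V) : x - projP f ℓ x ∈ chainD f ℓ := by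
  have h := Submodule.projection_add_projection_eq_self (chainD_isCompl f ℓ) x
  have : x - projP f ℓ x =
      ((chainD f ℓ).linearProjOfIsCompl (chainU f ℓ) (chainD_isCompl f ℓ).symm x : V) :=
    sub_eq_of_eq_add' h.symm
  rw [this]
  exact SetLike.coe_mem _

lemma projP_comp_of_le {ℓ m : ℕ} (h : ℓ ≤ m) (x : V) :
    projP f ℓ (projP f m x) = projP f ℓ x := by
  have h1 : x - projP f m x ∈ chainD f ℓ := chainD_anti f h (projP_sub_mem f m x)
  have h2 : projP f ℓ (x - projP f m x) = 0 := projP_right f h1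
  rw [map_sub] at h2
  exact (sub_eq_zero.1 h2).symm

lemma projP_comp_of_le' {ℓ m : ℕ} (h : ℓ ≤ m) (x : V) :
    projP f m (projP f ℓ x) = projP f ℓ x :=
  projP_left f (chainU_mono f h (projP_mem f ℓ x))

lemma projP_zero (x : V) : projP f 0 x = 0 := by
  have := projP_mem f 0 x
  rw [chainU_zero, Submodule.mem_bot] at this
  exact this

noncomputable def projQ (ℓ : ℕ) : Module.End K V := projP f (ℓ + 1) - projP f ℓ

lemma projQ_apply (ℓ : ℕ) (x : V) :
    projQ f ℓ x = projP f (ℓ + 1) x - projP f ℓ x := rfl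

lemma projQ_mem (ℓ : ℕ) (x : V) : projQ f ℓ x ∈ chainU f (ℓ + 1) := by
  rw [projQ_apply]
  exact sub_mem (projP_mem f (ℓ + 1) x) (chainU_le_succ f ℓ (projP_mem f ℓ x))

lemma projQ_eq_zero_of_mem {ℓ : ℕ} {x : V} (hx : x ∈ chainU f ℓ) :
    projQ f ℓ x = 0 := by
  rw [projQ_apply, projP_left f (chainU_le_succ f ℓ hx), projP_left f hx, sub_self]

lemma projQ_comp_self (ℓ : ℕ) (x : V) : projQ f ℓ (projQ f ℓ x) = projQ f ℓ x := by
  rw [projQ_apply f ℓ (projQ f ℓ x), projP_left f (projQ_mem f ℓ x)]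
  have : projP f ℓ (projQ f ℓ x) = 0 := by
    rw [projQ_apply, map_sub, projP_comp_of_le f (Nat.le_succ ℓ),
      projP_comp_of_le f (le_refl ℓ), sub_self]
  rw [this, sub_zero]

lemma projQ_comp_ne {i j : ℕ} (hij : i ≠ j) (x : V) :
    projQ f i (projQ f j x) = 0 := by
  rcases Nat.lt_or_ge i j with h | h
  · have hi1 : i + 1 ≤ j := h
    rw [projQ_apply f i (projQ f j x), projQ_apply f j x, map_sub, map_sub,
      projP_comp_of_le f (Nat.le_succ_of_le hi1), projP_comp_of_le f hi1,
      projP_comp_of_le f (Nat.le_succ_of_le (le_of_lt (Nat.lt_of_lt_of_le h (le_refl j)))),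
      projP_comp_of_le f (le_of_lt h)]
    abel
  · have hj : j < i := lt_of_le_of_ne h (Ne.symm hij)
    have hx1 : projQ f j x ∈ chainU f i := chainU_mono f hj (projQ_mem f j x)
    exact projQ_eq_zero_of_mem f hx1


lemma projQ_mul_self (ℓ : ℕ) : projQ f ℓ * projQ f ℓ = projQ f ℓ :=
  LinearMap.ext fun x => projQ_comp_self f ℓ x

lemma projQ_mul_ne {i j : ℕ} (hij : i ≠ j) : projQ f i * projQ f j = 0 :=
  LinearMap.ext fun x => projQ_comp_ne f hij x

lemma projQ_mul_of_lt {a : Module.End K V}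
    (ha : ∀ ℓ, ∀ w ∈ chainU f ℓ, a w ∈ chainU f ℓ) {i j : ℕ} (hij : j < i) :
    projQ f i * (a * projQ f j) = 0 := by
  ext x
  simp only [Module.End.mul_apply, LinearMap.zero_apply]
  have h1 : a (projQ f j x) ∈ chainU f (j + 1) := ha (j + 1) _ (projQ_mem f j x)
  exact projQ_eq_zero_of_mem f (chainU_mono f (Nat.succ_le_of_lt hij) h1)

open Module in
lemma sum_projQ [FiniteDimensional K V] :
    ∑ ℓ ∈ Finset.range (finrank K V), projQ f ℓ = 1 := by
  have h : ∑ ℓ ∈ Finset.range (finrank K V), projQ f ℓ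
      = projP f (finrank K V) - projP f 0 :=
    Finset.sum_range_sub (fun ℓ => projP f ℓ) (finrank K V)
  rw [h]
  ext x
  rw [LinearMap.sub_apply, projP_left f (by rw [chainU_top f]; exact Submodule.mem_top),
    projP_zero f x, sub_zero, Module.End.one_apply]

open Module in
lemma sum_projQ_apply [FiniteDimensional K V] (x : V) :
    ∑ ℓ ∈ Finset.range (finrank K V), projQ f ℓ x = x := by
  rw [← LinearMap.sum_apply, sum_projQ f, Module.End.one_apply]

open Module in
lemma sigma_mul [FiniteDimensional K V] {a b : Module.End K V}
    (ha : ∀ ℓ, ∀ w ∈ chainU f ℓ, a w ∈ chainU f ℓ)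
    (hb : ∀ ℓ, ∀ w ∈ chainU f ℓ, b w ∈ chainU f ℓ) :
    (∑ i ∈ Finset.range (finrank K V), projQ f i * a * projQ f i) *
      (∑ j ∈ Finset.range (finrank K V), projQ f j * b * projQ f j) =
    ∑ i ∈ Finset.range (finrank K V), projQ f i * (a * b) * projQ f i := by
  ext x
  rw [Module.End.mul_apply, LinearMap.sum_apply, LinearMap.sum_apply, LinearMap.sum_apply]
  refine Finset.sum_congr rfl ?_
  intro i hi
  simp only [Module.End.mul_apply]
  have inner : projQ f i (∑ j ∈ Finset.range (finrank K V), projQ f j (b (projQ f j x)))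
      = projQ f i (b (projQ f i x)) := by
    rw [map_sum, Finset.sum_eq_single_of_mem i hi]
    · rw [projQ_comp_self]
    · intro j hj hji
      rw [projQ_comp_ne f (Ne.symm hji)]
  rw [inner]
  have hdec : b (projQ f i x)
      = ∑ j ∈ Finset.range (finrank K V), projQ f j (b (projQ f i x)) :=
    (sum_projQ_apply f _).symm
  conv_rhs => rw [hdec, map_sum, map_sum]
  rw [Finset.sum_eq_single_of_mem i hi]
  · intro j hj hji
    rcases lt_or_gt_of_ne hji with hlt | hgt
    · -- j < i
      have h1 : projQ f j (b (projQ f i x)) ∈ chainU f i :=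
        chainU_mono f (Nat.succ_le_of_lt hlt) (projQ_mem f j _)
      have h2 : a (projQ f j (b (projQ f i x))) ∈ chainU f i := ha i _ h1
      exact projQ_eq_zero_of_mem f h2
    · -- i < j
      have h1 : b (projQ f i x) ∈ chainU f (i + 1) := hb (i + 1) _ (projQ_mem f i x)
      have h3 : projQ f j (b (projQ f i x)) = 0 :=
        projQ_eq_zero_of_mem f (chainU_mono f (Nat.succ_le_of_lt hgt) h1)
      rw [h3, map_zero, map_zero]

open Module in
lemma sigma_one [FiniteDimensional K V] :
    ∑ i ∈ Finset.range (finrank K V), projQ f i * (1 : Module.End K V) * projQ f i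
      = 1 := by
  simp only [mul_one, projQ_mul_self]
  exact sum_projQ f

open Module in
lemma diag_mul_diag [FiniteDimensional K V] (u v : ℕ → K) (huv : ∀ ℓ, u ℓ * v ℓ = 1) :
    (∑ i ∈ Finset.range (finrank K V), u i • projQ f i) *
      (∑ j ∈ Finset.range (finrank K V), v j • projQ f j) = 1 := by
  rw [Finset.sum_mul_sum]
  have : ∀ i ∈ Finset.range (finrank K V),
      ∑ j ∈ Finset.range (finrank K V), (u i • projQ f i) * (v j • projQ f j)
        = projQ f i := by
    intro i hi
    rw [Finset.sum_eq_single_of_mem i hi]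
    · rw [smul_mul_assoc, mul_smul_comm, smul_smul, huv i, projQ_mul_self, one_smul]
    · intro j hj hji
      rw [smul_mul_assoc, mul_smul_comm, projQ_mul_ne f (Ne.symm hji), smul_zero,
        smul_zero]
  rw [Finset.sum_congr rfl this]
  exact sum_projQ f


open Module in
lemma key_semisimple [FiniteDimensional K V] (W : Submodule K V)
    (hW : ∀ i, ∀ w ∈ W,
      (∑ ℓ ∈ Finset.range (finrank K V), projQ f ℓ * f i * projQ f ℓ) w ∈ W) :
    ∃ W', (∀ i, ∀ w ∈ W',
        (∑ ℓ ∈ Finset.range (finrank K V), projQ f ℓ * f i * projQ f ℓ) w ∈ W') ∧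
      IsCompl W W' := by
  classical
  set N := finrank K V with hN
  set σ : ι → Module.End K V :=
    fun i => ∑ ℓ ∈ Finset.range N, projQ f ℓ * f i * projQ f ℓ with hσ
  have hσ_apply : ∀ i x, σ i x = ∑ ℓ ∈ Finset.range N, projQ f ℓ (f i (projQ f ℓ x)) := by
    intro i x
    rw [hσ]
    rw [LinearMap.sum_apply]
    refine Finset.sum_congr rfl fun ℓ _ => ?_
    simp only [Module.End.mul_apply]
  -- the blocks
  set C : ℕ → Submodule K V := fun ℓ => LinearMap.range (projQ f ℓ) with hC
  have hC_mem : ∀ {ℓ x}, x ∈ C ℓ ↔ projQ f ℓ x = x := by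
    intro ℓ x
    constructor
    · rintro ⟨y, rfl⟩; exact projQ_comp_self f ℓ y
    · intro h; exact ⟨x, h⟩
  have hC_le : ∀ ℓ, C ℓ ≤ chainU f (ℓ + 1) := by
    rintro ℓ x ⟨y, rfl⟩; exact projQ_mem f ℓ y
  -- invariance of blocks under σ
  have hCinv : ∀ {ℓ}, ℓ ∈ Finset.range N → IsInvt σ (C ℓ) := by
    intro ℓ hℓ i w hw
    have hw' : projQ f ℓ w = w := hC_mem.1 hw
    rw [hσ_apply]
    rw [Finset.sum_eq_single_of_mem ℓ hℓ]
    · exact ⟨f i (projQ f ℓ w), rfl⟩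
    · intro j hj hjℓ
      rw [← hw', projQ_comp_ne f hjℓ, map_zero, map_zero]
  -- simplicity of blocks
  have hsimple : ∀ {ℓ}, ℓ ∈ Finset.range N → ∀ U : Submodule K V,
      IsInvt σ U → U ≤ C ℓ → U ≠ ⊥ → U = C ℓ := by
    intro ℓ hℓ U hU hUC hU0
    have hCU0 : ∀ x ∈ C ℓ, x ∈ chainU f ℓ → x = 0 := by
      intro x hx hx'
      rw [← hC_mem.1 hx]
      exact projQ_eq_zero_of_mem f hx'
    have hAne : chainU f ℓ ≠ ⊤ := by
      intro htop
      apply hU0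
      rw [Submodule.eq_bot_iff]
      intro u hu
      exact hCU0 u (hUC hu) (htop ▸ Submodule.mem_top)
    set X := chainU f ℓ ⊔ U with hX
    have hXinv : IsInvt f X := by
      intro i w hw
      rcases Submodule.mem_sup.1 hw with ⟨a, ha, u, hu, rfl⟩
      rw [map_add]
      refine Submodule.add_mem _ (le_sup_left (α := Submodule K V)
        (chainU_invt f ℓ i a ha)) ?_
      have hu' : projQ f ℓ u = u := hC_mem.1 (hUC hu)
      have hdec : f i u = ∑ j ∈ Finset.range N, projQ f j (f i u) :=
        (sum_projQ_apply f _).symm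
      rw [hdec]
      refine Submodule.sum_mem _ ?_
      intro j hj
      rcases lt_trichotomy j ℓ with hlt | rfl | hgt
      · -- j < ℓ : lands in chainU f ℓ
        refine le_sup_left (α := Submodule K V) ?_
        exact chainU_mono f (Nat.succ_le_of_lt hlt) (projQ_mem f j _)
      · -- j = ℓ : equals σ i u ∈ U
        have : projQ f j (f i u) = σ i u := by
          rw [hσ_apply, Finset.sum_eq_single_of_mem j hj]
          · rw [hu']
          · intro m hm hmj
            rw [← hu', projQ_comp_ne f hmj, map_zero, map_zero]
        rw [this]
        exact le_sup_right (α := Submodule K V) (hU i u hu)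
      · -- ℓ < j : vanishes
        have h1 : u ∈ chainU f (ℓ + 1) := hC_le ℓ (hUC hu)
        have h2 : f i u ∈ chainU f (ℓ + 1) := chainU_invt f (ℓ + 1) i u h1
        have h3 : projQ f j (f i u) = 0 :=
          projQ_eq_zero_of_mem f (chainU_mono f (Nat.succ_le_of_lt hgt) h2)
        rw [h3]
        exact Submodule.zero_mem _
    have hAX : chainU f ℓ < X := by
      refine lt_of_le_of_ne le_sup_left ?_
      intro heq
      apply hU0
      rw [Submodule.eq_bot_iff]
      intro u hu
      have : u ∈ chainU f ℓ := by
        rw [heq]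
        exact le_sup_right (α := Submodule K V) hu
      exact hCU0 u (hUC hu) this
    have hXB : X ≤ chainU f (ℓ + 1) :=
      sup_le (chainU_le_succ f ℓ) (le_trans hUC (hC_le ℓ))
    have hXeq : X = chainU f (ℓ + 1) := by
      rw [chainU_succ]
      refine nextSub_min f hAne X hXinv hAX ?_
      rw [← chainU_succ]
      exact hXB
    refine le_antisymm hUC ?_
    intro v hv
    have hv' : v ∈ X := by rw [hXeq]; exact hC_le ℓ hv
    rcases Submodule.mem_sup.1 hv' with ⟨a, ha, u, hu, rfl⟩
    have haC : a ∈ C ℓ := by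
      have : a = (a + u) - u := by abel
      rw [this]
      exact Submodule.sub_mem _ hv (hUC hu)
    have : a = 0 := hCU0 a haC ha
    rw [this, zero_add]
    exact hu
  -- Zorn's lemma
  set S : Set (Submodule K V) := {U | IsInvt σ U ∧ Disjoint W U} with hS
  have hchain : ∀ c ⊆ S, IsChain (· ≤ ·) c → ∀ y ∈ c, ∃ ub ∈ S, ∀ z ∈ c, z ≤ ub := by
    intro c hcS hc y hy
    refine ⟨sSup c, ⟨?_, ?_⟩, fun z hz => le_sSup hz⟩
    · intro i w hw
      rcases (Submodule.mem_sSup_of_directed ⟨y, hy⟩ (hc.directedOn)).1 hw with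
        ⟨U, hUc, hwU⟩
      exact le_sSup hUc ((hcS hUc).1 i w hwU)
    · rw [Submodule.disjoint_def]
      intro x hxW hxs
      rcases (Submodule.mem_sSup_of_directed ⟨y, hy⟩ (hc.directedOn)).1 hxs with
        ⟨U, hUc, hxU⟩
      exact Submodule.disjoint_def.1 (hcS hUc).2 x hxW hxU
  have hWinv : IsInvt σ W := fun i w hw => hW i w hw
  have hbot : (⊥ : Submodule K V) ∈ S := ⟨isInvt_bot σ, disjoint_bot_right⟩
  obtain ⟨M, -, hM⟩ := zorn_le_nonempty₀ S hchain ⊥ hbot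
  have hMS : M ∈ S := hM.prop
  refine ⟨M, fun i w hw => hMS.1 i w hw, hMS.2, ?_⟩
  -- codisjointness
  rw [codisjoint_iff]
  by_contra hcod
  have hCsome : ∃ ℓ ∈ Finset.range N, ¬ C ℓ ≤ W ⊔ M := by
    by_contra hall
    push_neg at hall
    apply hcod
    refine top_unique ?_
    intro x _
    have hdec : x = ∑ ℓ ∈ Finset.range N, projQ f ℓ x := (sum_projQ_apply f x).symm
    rw [hdec]
    exact Submodule.sum_mem _ fun ℓ hℓ => hall ℓ hℓ ⟨x, rfl⟩
  obtain ⟨ℓ, hℓ, hnle⟩ := hCsome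
  have hMinv : IsInvt σ M := hMS.1
  have hWMinv : IsInvt σ (W ⊔ M) := IsInvt.sup σ hWinv hMinv
  have hY : C ℓ ⊓ (W ⊔ M) = ⊥ := by
    by_contra hY0
    have := hsimple hℓ (C ℓ ⊓ (W ⊔ M)) (IsInvt.inf σ (hCinv hℓ) hWMinv)
      inf_le_left hY0
    exact hnle (by rw [← this]; exact inf_le_right)
  have hM'S : M ⊔ C ℓ ∈ S := by
    refine ⟨IsInvt.sup σ hMinv (hCinv hℓ), ?_⟩
    rw [Submodule.disjoint_def]
    intro w hwW hwMC
    rcases Submodule.mem_sup.1 hwMC with ⟨m, hm, v, hv, rfl⟩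
    have hvWM : v ∈ W ⊔ M := by
      have : v = (m + v) - m := by abel
      rw [this]
      exact Submodule.sub_mem _ (le_sup_left (α := Submodule K V) hwW)
        (le_sup_right (α := Submodule K V) hm)
    have hv0 : v = 0 := by
      have : v ∈ C ℓ ⊓ (W ⊔ M) := ⟨hv, hvWM⟩
      rw [hY] at this
      exact this
    rw [hv0, add_zero] at hwW ⊢
    exact Submodule.disjoint_def.1 hMS.2 m hwW hm
  have hle : M ⊔ C ℓ ≤ M := hM.2 hM'S le_sup_left
  exact hnle (le_trans (le_trans le_sup_right hle) le_sup_right)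

end Aux

lemma toMatrix'_sum {K : Type*} [Field K] {n : ℕ} {α : Type*} (s : Finset α)
    (F : α → ((Fin n → K) →ₗ[K] (Fin n → K))) :
    LinearMap.toMatrix' (∑ x ∈ s, F x) = ∑ x ∈ s, LinearMap.toMatrix' (F x) := by
  classical
  induction s using Finset.cons_induction with
  | empty => simp only [Finset.sum_empty]; exact LinearMap.toMatrix'.map_zero
  | cons x s hx ih =>
    rw [Finset.sum_cons, Finset.sum_cons, LinearMap.toMatrix'.map_add, ih]

lemma toMatrix'_smul {K : Type*} [Field K] {n : ℕ} (z : K)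
    (F : (Fin n → K) →ₗ[K] (Fin n → K)) :
    LinearMap.toMatrix' (z • F) = z • LinearMap.toMatrix' F :=
  LinearMap.toMatrix'.map_smul z F

/-- A representation `ρ : Γ →* GL_n(K)` is semisimple if every `ρ`-invariant subspace of
`K^n` admits a `ρ`-invariant complement. -/
def IsSemisimpleRep {K : Type*} [Field K] {n : ℕ} {Γ : Type*} [Group Γ]
    (ρ : Γ →* Matrix.GeneralLinearGroup (Fin n) K) : Prop :=
  ∀ W : Submodule K (Fin n → K),
    (∀ γ : Γ, ∀ w ∈ W, (ρ γ : Matrix (Fin n) (Fin n) K) *ᵥ w ∈ W) →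
    ∃ W' : Submodule K (Fin n → K),
      (∀ γ : Γ, ∀ w ∈ W', (ρ γ : Matrix (Fin n) (Fin n) K) *ᵥ w ∈ W') ∧ IsCompl W W'

/-- Over a local field `K` (a nontrivially normed field which is a proper
metric space), any representation `ρ : Γ →* GL_n(K)` of a finitely generated group admits a
semisimple representation `σ` in the closure of its conjugation orbit: there is a sequence
`(g_k)` in `GL_n(K)` with `g_k ρ(γ) g_k⁻¹ → σ(γ)` entrywise for every `γ`. -/
theorem stmt14 {K : Type*} [NontriviallyNormedField K] [ProperSpace K]
    {Γ : Type*} [Group Γ] [Group.FG Γ] {n : ℕ}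
    (ρ : Γ →* Matrix.GeneralLinearGroup (Fin n) K) :
    ∃ σ : Γ →* Matrix.GeneralLinearGroup (Fin n) K,
      IsSemisimpleRep σ ∧
      ∃ g : ℕ → Matrix.GeneralLinearGroup (Fin n) K,
        ∀ γ : Γ,
          Tendsto
            (fun k : ℕ =>
              ((g k * ρ γ * (g k)⁻¹ : Matrix.GeneralLinearGroup (Fin n) K) :
                Matrix (Fin n) (Fin n) K))
            atTop (nhds ((σ γ : Matrix (Fin n) (Fin n) K))) := by
  classical
  -- the representation as a family of endomorphisms of `Fin n → K`
  let f : Γ → Module.End K (Fin n → K) :=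
    fun γ => Matrix.mulVecLin ((ρ γ : Matrix (Fin n) (Fin n) K))
  have hf_mul : ∀ γ γ', f (γ * γ') = f γ * f γ' := by
    intro γ γ'
    show Matrix.mulVecLin _ = _
    rw [map_mul ρ, Units.val_mul, Matrix.mulVecLin_mul]
    rfl
  have hf_one : f 1 = 1 := by
    show Matrix.mulVecLin _ = 1
    rw [map_one ρ, Units.val_one, Matrix.mulVecLin_one]
    rfl
  have hρmat : ∀ γ, ((ρ γ : Matrix (Fin n) (Fin n) K)) = LinearMap.toMatrix' (f γ) := by
    intro γ
    show _ = LinearMap.toMatrix' (Matrix.mulVecLin _)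
    rw [← Matrix.toLin'_apply', LinearMap.toMatrix'_toLin']
  set N := Module.finrank K (Fin n → K) with hN
  set q : ℕ → Module.End K (Fin n → K) := projQ f with hq
  set σe : Γ → Module.End K (Fin n → K) :=
    fun γ => ∑ ℓ ∈ Finset.range N, q ℓ * f γ * q ℓ with hσe
  have hinv : ∀ γ ℓ, ∀ w ∈ chainU f ℓ, f γ w ∈ chainU f ℓ :=
    fun γ ℓ w hw => chainU_invt f ℓ γ w hw
  have hσe_mul : ∀ γ γ', σe γ * σe γ' = σe (γ * γ') := by
    intro γ γ'
    rw [hσe]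
    rw [sigma_mul f (hinv γ) (hinv γ'), ← hf_mul]
  have hσe_one : σe 1 = 1 := by
    rw [hσe]
    simp only [hf_one]
    exact sigma_one f
  have hσe_cancel : ∀ γ, σe γ * σe γ⁻¹ = 1 := by
    intro γ
    rw [hσe_mul, mul_inv_cancel, hσe_one]
  have hσe_cancel' : ∀ γ, σe γ⁻¹ * σe γ = 1 := by
    intro γ
    rw [hσe_mul, inv_mul_cancel, hσe_one]
  -- the semisimple limit representation
  let σ : Γ →* Matrix.GeneralLinearGroup (Fin n) K :=
  { toFun := fun γ =>
      ⟨LinearMap.toMatrix' (σe γ), LinearMap.toMatrix' (σe γ⁻¹),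
        by rw [← LinearMap.toMatrix'_mul, hσe_cancel, LinearMap.toMatrix'_one],
        by rw [← LinearMap.toMatrix'_mul, hσe_cancel', LinearMap.toMatrix'_one]⟩
    map_one' := Units.ext (by
      show LinearMap.toMatrix' (σe 1) = 1
      rw [hσe_one, LinearMap.toMatrix'_one])
    map_mul' := fun γ γ' => Units.ext (by
      show LinearMap.toMatrix' (σe (γ * γ')) = _
      rw [Units.val_mul]
      show _ = LinearMap.toMatrix' (σe γ) * LinearMap.toMatrix' (σe γ')
      rw [← LinearMap.toMatrix'_mul, hσe_mul]) }
  have hσval : ∀ γ, ((σ γ : Matrix (Fin n) (Fin n) K)) = LinearMap.toMatrix' (σe γ) :=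
    fun γ => rfl
  have hmulvec : ∀ (g : Module.End K (Fin n → K)) (w : Fin n → K),
      LinearMap.toMatrix' g *ᵥ w = g w := by
    intro g w
    rw [← Matrix.toLin'_apply, Matrix.toLin'_toMatrix']
  -- semisimplicity
  have hss : IsSemisimpleRep σ := by
    intro W hWinv
    have hW' : ∀ γ, ∀ w ∈ W,
        (∑ ℓ ∈ Finset.range (Module.finrank K (Fin n → K)),
          projQ f ℓ * f γ * projQ f ℓ) w ∈ W := by
      intro γ w hw
      have := hWinv γ w hw
      rw [hσval, hmulvec] at this
      exact this
    obtain ⟨W', hW'inv, hcompl⟩ := key_semisimple f W hW'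
    refine ⟨W', ?_, hcompl⟩
    intro γ w hw
    rw [hσval, hmulvec]
    exact hW'inv γ w hw
  -- the conjugating sequence
  obtain ⟨c, hc⟩ := NormedField.exists_one_lt_norm K
  have hc0 : c ≠ 0 := by
    intro h
    rw [h, norm_zero] at hc
    linarith
  let a : ℕ → Module.End K (Fin n → K) :=
    fun k => ∑ i ∈ Finset.range N, ((c ^ i) ^ k) • q i
  let b : ℕ → Module.End K (Fin n → K) :=
    fun k => ∑ j ∈ Finset.range N, ((c⁻¹ ^ j) ^ k) • q j
  have hab : ∀ k, a k * b k = 1 := by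
    intro k
    refine diag_mul_diag f _ _ fun ℓ => ?_
    rw [← mul_pow, ← mul_pow, mul_inv_cancel₀ hc0, one_pow, one_pow]
  have hba : ∀ k, b k * a k = 1 := by
    intro k
    refine diag_mul_diag f _ _ fun ℓ => ?_
    rw [← mul_pow, ← mul_pow, inv_mul_cancel₀ hc0, one_pow, one_pow]
  let g : ℕ → Matrix.GeneralLinearGroup (Fin n) K := fun k =>
    ⟨LinearMap.toMatrix' (a k), LinearMap.toMatrix' (b k),
      by rw [← LinearMap.toMatrix'_mul, hab k, LinearMap.toMatrix'_one],
      by rw [← LinearMap.toMatrix'_mul, hba k, LinearMap.toMatrix'_one]⟩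
  refine ⟨σ, hss, g, ?_⟩
  intro γ
  have hval : ∀ k, ((g k * ρ γ * (g k)⁻¹ : Matrix.GeneralLinearGroup (Fin n) K) :
      Matrix (Fin n) (Fin n) K) = LinearMap.toMatrix' (a k * f γ * b k) := by
    intro k
    rw [Units.val_mul, Units.val_mul]
    have h1 : (((g k)⁻¹ : Matrix.GeneralLinearGroup (Fin n) K) :
        Matrix (Fin n) (Fin n) K) = LinearMap.toMatrix' (b k) := rfl
    rw [h1, hρmat, ← LinearMap.toMatrix'_mul, ← LinearMap.toMatrix'_mul]
  have hexp : ∀ k, LinearMap.toMatrix' (a k * f γ * b k)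
      = ∑ p ∈ Finset.range N ×ˢ Finset.range N,
          ((c ^ p.1 * c⁻¹ ^ p.2) ^ k) •
            LinearMap.toMatrix' (q p.1 * f γ * q p.2) := by
    intro k
    have e1 : a k * f γ * b k
        = ∑ i ∈ Finset.range N, ∑ j ∈ Finset.range N,
            ((c ^ i * c⁻¹ ^ j) ^ k) • (q i * f γ * q j) := by
      show (∑ i ∈ Finset.range N, ((c ^ i) ^ k) • q i) * f γ *
          (∑ j ∈ Finset.range N, ((c⁻¹ ^ j) ^ k) • q j) = _
      rw [Finset.sum_mul, Finset.sum_mul_sum]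
      refine Finset.sum_congr rfl fun i _ => Finset.sum_congr rfl fun j _ => ?_
      rw [smul_mul_assoc, smul_mul_assoc, mul_smul_comm, smul_smul, ← mul_pow]
    rw [e1, ← Finset.sum_product']
    rw [toMatrix'_sum]
    refine Finset.sum_congr rfl fun p _ => ?_
    rw [toMatrix'_smul]
  have hfun : (fun k : ℕ => ((g k * ρ γ * (g k)⁻¹ : Matrix.GeneralLinearGroup (Fin n) K) :
      Matrix (Fin n) (Fin n) K))
      = fun k => ∑ p ∈ Finset.range N ×ˢ Finset.range N,
          ((c ^ p.1 * c⁻¹ ^ p.2) ^ k) •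
            LinearMap.toMatrix' (q p.1 * f γ * q p.2) := by
    funext k
    rw [hval, hexp]
  rw [hfun]
  have hlim : ((σ γ : Matrix (Fin n) (Fin n) K))
      = ∑ p ∈ Finset.range N ×ˢ Finset.range N,
          (if p.2 = p.1 then LinearMap.toMatrix' (q p.1 * f γ * q p.2) else 0) := by
    show LinearMap.toMatrix' (∑ ℓ ∈ Finset.range N, q ℓ * f γ * q ℓ) = _
    rw [toMatrix'_sum, Finset.sum_product]
    refine Finset.sum_congr rfl fun i hi => ?_
    rw [Finset.sum_ite_eq' (Finset.range N) i
      (fun j => LinearMap.toMatrix' (q i * f γ * q j)), if_pos hi]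
  rw [hlim]
  refine tendsto_finset_sum _ ?_
  rintro ⟨i, j⟩ hp
  rcases lt_trichotomy i j with hlt | heq | hgt
  · -- i < j : coefficient tends to 0
    rw [if_neg (by omega)]
    have hnorm : ‖c ^ i * c⁻¹ ^ j‖ < 1 := by
      have h1 : ‖c ^ i * c⁻¹ ^ j‖ = ‖c‖ ^ i / ‖c‖ ^ j := by
        rw [norm_mul, norm_pow, norm_pow, norm_inv, div_eq_mul_inv, inv_pow]
      rw [h1, div_lt_one (by positivity)]
      exact pow_lt_pow_right₀ hc hlt
    have h0 := (tendsto_pow_atTop_nhds_zero_of_norm_lt_one hnorm).smul_const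
      (LinearMap.toMatrix' (q i * f γ * q j))
    rw [zero_smul] at h0
    exact h0
  · -- i = j : constant
    subst heq
    rw [if_pos rfl]
    have h1 : c ^ i * c⁻¹ ^ i = 1 := by
      rw [← mul_pow, mul_inv_cancel₀ hc0, one_pow]
    simp only [h1, one_pow, one_smul]
    exact tendsto_const_nhds
  · -- j < i : the block is zero
    have hz : q i * f γ * q j = 0 := by
      rw [mul_assoc]
      exact projQ_mul_of_lt f (hinv γ) hgt
    rw [if_neg (by omega), hz, LinearMap.toMatrix'.map_zero]
    simp only [smul_zero]
    exact tendsto_const_nhds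
end

section
/- Let K be a nontrivially normed field which is a proper metric space (a local field), Γ a finitely generated group, n : ℕ, and ρ, ρ' : Γ →* GL_n(K) two semisimple group homomorphisms that are not separated by conjugation: there exist a sequence of group homomorphisms ρ_k : Γ →* GL_n(K) and a sequence (g_k) in GL_n(K) such that for every γ ∈ Γ, ρ_k(γ) → ρ(γ) and g_k · ρ_k(γ) · g_k⁻¹ → ρ'(γ) entrywise. Then ρ and ρ' are conjugate: there exists h ∈ GL_n(K) with ρ'(γ) = h · ρ(γ) · h⁻¹ for all γ ∈ Γ. -/
open Filter Topology
open scoped Matrix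

open Module Polynomial LinearMap


universe u

section Core

variable {K : Type*} [Field K] {A : Type*} [Ring A] [Algebra K A]

/-- The `K`-linear endomorphism of an `A`-module given by the action of `a : A`. -/
def aSmul (a : A) (M : Type*) [AddCommGroup M] [Module K M] [Module A M]
    [IsScalarTower K A M] : M →ₗ[K] M where
  toFun m := a • m
  map_add' x y := smul_add a x y
  map_smul' c m := by
    simp only [RingHom.id_apply]
    rw [← algebraMap_smul A c m, ← mul_smul, ← Algebra.commutes, mul_smul, algebraMap_smul]

@[simp] lemma aSmul_apply (a : A) {M : Type*} [AddCommGroup M] [Module K M] [Module A M]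
    [IsScalarTower K A M] (m : M) : aSmul (K := K) a M m = a • m := rfl

/-- The characteristic polynomial of the action of `a` on a finite-dimensional module `M`. -/
noncomputable def chp (a : A) (M : Type*) [AddCommGroup M] [Module K M] [Module A M]
    [IsScalarTower K A M] [Module.Finite K M] : K[X] :=
  (aSmul (K := K) a M).charpoly

variable (a : A) {M N : Type*} [AddCommGroup M] [Module K M] [Module A M]
  [IsScalarTower K A M] [AddCommGroup N] [Module K N] [Module A N] [IsScalarTower K A N]

lemma aSmul_prod : aSmul (K := K) a (M × N) = (aSmul (K := K) a M).prodMap (aSmul (K := K) a N) := by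
  ext x <;> rfl

lemma chp_prod [Module.Finite K M] [Module.Finite K N] :
    chp (K := K) a (M × N) = chp (K := K) a M * chp (K := K) a N := by
  rw [chp, aSmul_prod, LinearMap.charpoly_prodMap]; rfl

lemma chp_congr [Module.Finite K M] [Module.Finite K N] (e : M ≃ₗ[A] N) :
    chp (K := K) a M = chp (K := K) a N := by
  have h : aSmul (K := K) a N = (e.restrictScalars K).conj (aSmul (K := K) a M) := by
    ext x
    simp [LinearEquiv.conj_apply, map_smul]
  rw [chp, chp, h, LinearEquiv.charpoly_conj]

lemma chp_natDegree [Module.Finite K M] : (chp (K := K) a M).natDegree = finrank K M :=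
  LinearMap.charpoly_natDegree _

lemma chp_monic [Module.Finite K M] : (chp (K := K) a M).Monic :=
  LinearMap.charpoly_monic _

lemma finrank_eq_of_chp [Module.Finite K M] [Module.Finite K N]
    (h : ∀ a : A, chp (K := K) a M = chp (K := K) a N) :
    finrank K M = finrank K N := by
  rw [← chp_natDegree (K := K) (1 : A) (M := M), h 1, chp_natDegree]

end Core



section SS

variable {A : Type*} [Ring A] {N : Type*} [AddCommGroup N] [Module A N]

lemma ssPi {ι : Type*} [Fintype ι] [DecidableEq ι] [IsSemisimpleModule A N] :
    IsSemisimpleModule A (ι → N) := by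
  refine isSemisimpleModule_of_isSemisimpleModule_submodule'
    (p := fun i => LinearMap.range (LinearMap.single A (fun _ : ι => N) i)) (fun i => ?_) ?_
  · exact IsSemisimpleModule.range _
  · refine top_le_iff.mp fun x _ => ?_
    have : x = ∑ i : ι, Pi.single i (x i) := by
      ext j; simp [Finset.sum_apply, Pi.single_apply]
    rw [this]
    exact Submodule.sum_mem _ fun i _ => Submodule.mem_iSup_of_mem i ⟨x i, rfl⟩

lemma ssProd {M : Type*} [AddCommGroup M] [Module A M]
    [IsSemisimpleModule A M] [IsSemisimpleModule A N] :
    IsSemisimpleModule A (M × N) := by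
  have h1 : IsSemisimpleModule A ↥(LinearMap.range (LinearMap.inl A M N)) :=
    IsSemisimpleModule.range _
  have h2 : IsSemisimpleModule A ↥(LinearMap.range (LinearMap.inr A M N)) :=
    IsSemisimpleModule.range _
  have h3 := IsSemisimpleModule.sup h1 h2
  rw [LinearMap.sup_range_inl_inr] at h3
  exact h3.congr Submodule.topEquiv.symm

variable {K : Type*} [Field K] [Algebra K A] [Module K N] [IsScalarTower K A N]

/-- Jacobson-density-style lemma: an `A`-linear endomorphism of a finite-dimensional
semisimple module commuting with every `A`-linear endomorphism is given by the action
of some element of `A`. -/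
lemma commute_all_exists_smul [Module.Finite K N] [IsSemisimpleModule A N]
    (f : N →ₗ[A] N) (hf : ∀ φ : N →ₗ[A] N, φ ∘ₗ f = f ∘ₗ φ) :
    ∃ r : A, ∀ x : N, r • x = f x := by
  classical
  set d := finrank K N with hd
  let b := Module.finBasis K N
  let P := Fin d → N
  let v : P := fun i => b i
  haveI : IsSemisimpleModule A P := ssPi
  let Rv : Submodule A P := LinearMap.range (LinearMap.toSpanSingleton A P v)
  obtain ⟨Q, hQ⟩ := exists_isCompl Rv
  let E : P →ₗ[A] P := Rv.subtype ∘ₗ (Rv.projectionOnto Q hQ)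
  let F : P →ₗ[A] P := LinearMap.pi (fun i => f ∘ₗ LinearMap.proj i)
  have hFapp : ∀ (x : P) (i : Fin d), F x i = f (x i) := fun x i => rfl
  -- componentwise commutation of `E` and `F`
  have hcomm : ∀ x : P, F (E x) = E (F x) := by
    intro x
    let Ec : Fin d → Fin d → (N →ₗ[A] N) := fun i j =>
      (LinearMap.proj i) ∘ₗ E ∘ₗ (LinearMap.single A (fun _ : Fin d => N) j)
    have hdecomp : ∀ (y : P) (i : Fin d), E y i = ∑ j : Fin d, Ec i j (y j) := by
      intro y i
      have hy : y = ∑ j : Fin d, Pi.single j (y j) := by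
        ext j; simp [Finset.sum_apply, Pi.single_apply]
      conv_lhs => rw [hy]
      rw [map_sum, Finset.sum_apply]
      exact Finset.sum_congr rfl fun j _ => rfl
    ext i
    rw [hFapp, hdecomp, hdecomp, map_sum]
    refine Finset.sum_congr rfl fun j _ => ?_
    have := hf (Ec i j)
    have h2 : (Ec i j) (f (x j)) = f ((Ec i j) (x j)) := by
      have := congrArg (fun g => g (x j)) (hf (Ec i j))
      simpa using this
    rw [hFapp, ← h2]
  have hvRv : v ∈ Rv := ⟨1, one_smul _ _⟩
  have hEv : E v = v := by
    simp only [E, LinearMap.comp_apply]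
    rw [Submodule.linearProjOfIsCompl_apply_left hQ ⟨v, hvRv⟩]
    rfl
  have hFv : F v ∈ Rv := by
    have : F v = E (F v) := by rw [← hcomm, hEv]
    rw [this]
    exact (Rv.projectionOnto Q hQ (F v)).2
  obtain ⟨r, hr⟩ := hFv
  refine ⟨r, fun x => ?_⟩
  -- both sides are `K`-linear and agree on the basis
  have hbasis : ∀ i : Fin d, r • (b i : N) = f (b i) := by
    intro i
    have := congrFun hr i
    exact this
  have heq : (aSmul (K := K) r N) = f.restrictScalars K := b.ext fun i => by
    simpa using hbasis i
  have := congrArg (fun g => g x) heq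
  simpa using this
end SS

section NoHom

variable {K : Type*} [Field K] {A : Type*} [Ring A] [Algebra K A]
variable {M₁ : Type*} [AddCommGroup M₁] [Module K M₁] [Module A M₁] [IsScalarTower K A M₁]
variable {M₂ : Type*} [AddCommGroup M₂] [Module K M₂] [Module A M₂] [IsScalarTower K A M₂]

lemma no_common_factor_contradiction [Module.Finite K M₁] [Module.Finite K M₂]
    [IsSemisimpleModule A M₁] [IsSemisimpleModule A M₂]
    (h12 : ∀ f : M₁ →ₗ[A] M₂, f = 0) (h21 : ∀ f : M₂ →ₗ[A] M₁, f = 0)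
    (hchar : ∀ a : A, chp (K := K) a M₁ = chp (K := K) a M₂)
    (hpos : 0 < finrank K M₁) : False := by
  haveI : IsSemisimpleModule A (M₁ × M₂) := ssProd
  set f : (M₁ × M₂) →ₗ[A] (M₁ × M₂) :=
    (LinearMap.inl A M₁ M₂) ∘ₗ (LinearMap.fst A M₁ M₂) with hfdef
  have hf : ∀ φ : (M₁ × M₂) →ₗ[A] (M₁ × M₂), φ ∘ₗ f = f ∘ₗ φ := by
    intro φ
    have hc1 : (LinearMap.snd A M₁ M₂) ∘ₗ φ ∘ₗ (LinearMap.inl A M₁ M₂) = 0 := h12 _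
    have hc2 : (LinearMap.fst A M₁ M₂) ∘ₗ φ ∘ₗ (LinearMap.inr A M₁ M₂) = 0 := h21 _
    apply LinearMap.ext
    rintro ⟨x, y⟩
    have e1 : (φ (x, 0)).2 = 0 := by
      have := LinearMap.congr_fun hc1 x; simpa using this
    have e2 : (φ (0, y)).1 = 0 := by
      have := LinearMap.congr_fun hc2 y; simpa using this
    have hxy : (x, y) = ((x, 0) : M₁ × M₂) + (0, y) := by simp
    simp only [LinearMap.comp_apply, hfdef, LinearMap.fst_apply, LinearMap.inl_apply]
    refine Prod.ext ?_ ?_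
    · show (φ (x, 0)).1 = (φ (x, y)).1
      rw [hxy, map_add]
      simp [e2]
    · show (φ (x, 0)).2 = 0
      exact e1
  obtain ⟨r, hr⟩ := commute_all_exists_smul (K := K) f hf
  have hr1 : ∀ x : M₁, r • x = x := by
    intro x
    have := congrArg Prod.fst (hr (x, 0))
    simpa [hfdef] using this
  have hr2 : ∀ y : M₂, r • y = 0 := by
    intro y
    have := congrArg Prod.snd (hr (0, y))
    simpa [hfdef] using this
  have e1 : aSmul (K := K) r M₁ = LinearMap.id := LinearMap.ext fun x => hr1 x
  have e2 : aSmul (K := K) r M₂ = 0 := LinearMap.ext fun y => hr2 y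
  have hc := hchar r
  rw [chp, chp, e1, e2] at hc
  have hd2 : 0 < finrank K M₂ := by
    rw [← finrank_eq_of_chp hchar]; exact hpos
  have hdet2 : LinearMap.det (0 : M₂ →ₗ[K] M₂) = 0 := by
    rw [← LinearMap.det_toMatrix (Module.finBasis K M₂), map_zero]
    haveI : Nonempty (Fin (finrank K M₂)) := ⟨⟨0, hd2⟩⟩
    exact Matrix.det_zero
  have q1 := LinearMap.det_eq_sign_charpoly_coeff (LinearMap.id : M₁ →ₗ[K] M₁)
  have q2 := LinearMap.det_eq_sign_charpoly_coeff (0 : M₂ →ₗ[K] M₂)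
  rw [LinearMap.det_id, hc] at q1
  rw [hdet2] at q2
  have hcoeff : ((0 : M₂ →ₗ[K] M₂).charpoly.coeff 0) = 0 := by
    rcases mul_eq_zero.mp q2.symm with h | h
    · exact absurd h (pow_ne_zero _ (neg_ne_zero.mpr (one_ne_zero : (1:K) ≠ 0)))
    · exact h
  rw [hcoeff, mul_zero] at q1
  exact one_ne_zero q1

end NoHom

section Split

variable {A : Type*} [Ring A]
variable {M₁ : Type*} [AddCommGroup M₁] [Module A M₁] [IsSemisimpleModule A M₁]
variable {M₂ : Type*} [AddCommGroup M₂] [Module A M₂] [IsSemisimpleModule A M₂]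

lemma split_of_hom (φ : M₁ →ₗ[A] M₂) (hφ : φ ≠ 0) :
    ∃ (S : Submodule A M₂) (N₁ : Submodule A M₁) (N₂ : Submodule A M₂),
      IsSimpleModule A ↥S ∧ Nonempty (M₁ ≃ₗ[A] ↥S × ↥N₁) ∧
        Nonempty (M₂ ≃ₗ[A] ↥S × ↥N₂) := by
  have hrange : LinearMap.range φ ≠ ⊥ := by rwa [Ne, LinearMap.range_eq_bot]
  obtain ⟨S, hSle, hS⟩ :=
    (IsSemisimpleModule.eq_bot_or_exists_simple_le (LinearMap.range φ)).resolve_left hrange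
  haveI := hS
  obtain ⟨N₂, hN₂⟩ := exists_isCompl S
  let π : M₂ →ₗ[A] ↥S := S.linearProjOfIsCompl N₂ hN₂
  let ψ : M₁ →ₗ[A] ↥S := π ∘ₗ φ
  have hπS : ∀ s : ↥S, π (s : M₂) = s := fun s =>
    Submodule.linearProjOfIsCompl_apply_left hN₂ s
  have hne : ψ ≠ 0 := by
    intro h0
    haveI : Nontrivial ↥S := IsSimpleModule.nontrivial (R := A) (M := ↥S)
    obtain ⟨s, hs0⟩ := exists_ne (0 : ↥S)
    obtain ⟨y, hy⟩ := hSle s.2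
    have : ψ y = s := by
      simp only [ψ, LinearMap.comp_apply, hy]
      exact hπS s
    rw [h0] at this
    exact hs0 (by simpa using this.symm)
  have hψsurj : Function.Surjective ψ := LinearMap.surjective_of_ne_zero hne
  set N₁ := LinearMap.ker ψ with hN₁def
  obtain ⟨C₁, hC₁⟩ := exists_isCompl N₁
  let ψ' : ↥C₁ →ₗ[A] ↥S := ψ ∘ₗ C₁.subtype
  have hinj : Function.Injective ψ' := by
    rw [← LinearMap.ker_eq_bot]
    rw [Submodule.eq_bot_iff]
    rintro ⟨x, hxC⟩ hx
    have hxN : x ∈ N₁ := by simpa [ψ', LinearMap.mem_ker, hN₁def] using hx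
    have : x ∈ N₁ ⊓ C₁ := ⟨hxN, hxC⟩
    rw [hC₁.inf_eq_bot] at this
    simpa using this
  have hsurj' : Function.Surjective ψ' := by
    intro s
    obtain ⟨y, hy⟩ := hψsurj s
    have hmem : y ∈ N₁ ⊔ C₁ := by rw [hC₁.sup_eq_top]; trivial
    obtain ⟨m, hm, c, hc, hmc⟩ := Submodule.mem_sup.mp hmem
    refine ⟨⟨c, hc⟩, ?_⟩
    have hm0 : ψ m = 0 := hm
    have : ψ c = s := by
      have : ψ (m + c) = s := by rw [hmc]; exact hy
      rwa [map_add, hm0, zero_add] at this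
    simpa [ψ'] using this
  refine ⟨S, N₁, N₂, hS, ?_, ⟨(Submodule.prodEquivOfIsCompl S N₂ hN₂).symm⟩⟩
  exact ⟨(Submodule.prodEquivOfIsCompl C₁ N₁ hC₁.symm).symm.trans
    ((LinearEquiv.ofBijective ψ' ⟨hinj, hsurj'⟩).prodCongr (LinearEquiv.refl A ↥N₁))⟩

end Split

section FiniteK

lemma finiteK {K : Type*} [Field K] {A : Type*} [Ring A] [Algebra K A]
    {M : Type*} [AddCommGroup M] [Module K M] [Module A M] [IsScalarTower K A M]
    [Module.Finite K M] (p : Submodule A M) : Module.Finite K ↥p := by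
  have e : ↥(p.restrictScalars K) ≃ₗ[K] ↥p :=
    (Submodule.restrictScalarsEquiv K A M p).restrictScalars K
  exact Module.Finite.equiv e

end FiniteK

section CoreInduction

universe v

variable {K : Type*} [Field K] {A : Type*} [Ring A] [Algebra K A]

theorem core_iso :
    ∀ (d : ℕ) (M₁ M₂ : Type v)
      [AddCommGroup M₁] [AddCommGroup M₂] [Module K M₁] [Module K M₂]
      [Module A M₁] [Module A M₂] [IsScalarTower K A M₁] [IsScalarTower K A M₂]
      [Module.Finite K M₁] [Module.Finite K M₂]
      [IsSemisimpleModule A M₁] [IsSemisimpleModule A M₂],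
      finrank K M₁ = d → (∀ a : A, chp (K := K) a M₁ = chp (K := K) a M₂) →
      Nonempty (M₁ ≃ₗ[A] M₂) := by
  intro d
  induction d using Nat.strong_induction_on with
  | _ d IH =>
  intro M₁ M₂ _ _ _ _ _ _ _ _ _ _ _ _ hd hchar
  have hd₂ : finrank K M₂ = d := by rw [← finrank_eq_of_chp hchar, hd]
  rcases Nat.eq_zero_or_pos d with h0 | hpos
  · subst h0
    haveI : Subsingleton M₁ := Module.finrank_zero_iff.mp hd
    haveI : Subsingleton M₂ := Module.finrank_zero_iff.mp hd₂
    exact ⟨LinearEquiv.ofSubsingleton M₁ M₂⟩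
  by_cases hex : (∃ φ : M₁ →ₗ[A] M₂, φ ≠ 0) ∨ ∃ φ : M₂ →ₗ[A] M₁, φ ≠ 0
  · have key : ∀ (S : Type v) [AddCommGroup S] [Module K S] [Module A S],
        ∀ [IsScalarTower K A S] [Module.Finite K S],
        Nontrivial S →
        ∀ (N₁ : Submodule A M₁) (N₂ : Submodule A M₂),
        (M₁ ≃ₗ[A] S × ↥N₁) → (M₂ ≃ₗ[A] S × ↥N₂) → Nonempty (M₁ ≃ₗ[A] M₂) := by
      intro S _ _ _ _ _ hS N₁ N₂ e₁ e₂
      haveI : Module.Finite K ↥N₁ := finiteK N₁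
      haveI : Module.Finite K ↥N₂ := finiteK N₂
      have hchar' : ∀ a : A, chp (K := K) a ↥N₁ = chp (K := K) a ↥N₂ := by
        intro a
        have h1 := ((chp_congr a e₁).symm.trans (hchar a)).trans (chp_congr a e₂)
        rw [chp_prod, chp_prod] at h1
        exact mul_left_cancel₀ (chp_monic (K := K) a (M := S)).ne_zero h1
      have hrank : finrank K ↥N₁ < d := by
        have h2 := LinearEquiv.finrank_eq (e₁.restrictScalars K)
        rw [Module.finrank_prod, hd] at h2
        have hSpos : 0 < finrank K S := Module.finrank_pos_iff.mpr hS
        omega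
      obtain ⟨g⟩ := IH (finrank K ↥N₁) hrank ↥N₁ ↥N₂ rfl hchar'
      exact ⟨(e₁.trans ((LinearEquiv.refl A S).prodCongr g)).trans e₂.symm⟩
    rcases hex with ⟨φ, hφ⟩ | ⟨φ, hφ⟩
    · obtain ⟨S, N₁, N₂, hS, ⟨f₁⟩, ⟨f₂⟩⟩ := split_of_hom φ hφ
      haveI : Module.Finite K ↥S := finiteK S
      exact key ↥S (IsSimpleModule.nontrivial (R := A) (M := ↥S)) N₁ N₂ f₁ f₂
    · obtain ⟨S, N₂, N₁, hS, ⟨f₂⟩, ⟨f₁⟩⟩ := split_of_hom φ hφ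
      haveI : Module.Finite K ↥S := finiteK S
      exact key ↥S (IsSimpleModule.nontrivial (R := A) (M := ↥S)) N₁ N₂ f₁ f₂
  · push_neg at hex
    obtain ⟨h12, h21⟩ := hex
    exact absurd (no_common_factor_contradiction h12 h21 hchar (hd ▸ hpos)) not_false

end CoreInduction

section RepBridge

open scoped Matrix

variable {K : Type*} [Field K] {Γ : Type*} [Group Γ] {n : ℕ}

/-- The algebra morphism from the monoid algebra to matrices induced by a representation. -/
noncomputable def psiRep (ρ : Γ →* Matrix.GeneralLinearGroup (Fin n) K) :
    MonoidAlgebra K Γ →ₐ[K] Matrix (Fin n) (Fin n) K :=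
  MonoidAlgebra.lift K _ Γ ((Units.coeHom (Matrix (Fin n) (Fin n) K)).comp ρ)

lemma psiRep_single (ρ : Γ →* Matrix.GeneralLinearGroup (Fin n) K) (γ : Γ) :
    psiRep ρ (MonoidAlgebra.single γ (1 : K)) = (ρ γ : Matrix (Fin n) (Fin n) K) := by
  rw [psiRep, MonoidAlgebra.lift_single, one_smul]; rfl

lemma psiRep_apply (ρ : Γ →* Matrix.GeneralLinearGroup (Fin n) K) (a : MonoidAlgebra K Γ) :
    psiRep ρ a = a.coeff.sum fun γ c => c • (ρ γ : Matrix (Fin n) (Fin n) K) :=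
  MonoidAlgebra.lift_apply _ _

/-- Type synonym for `Fin n → K` carrying the module structure over the monoid algebra
associated to the representation `ρ`. -/
def RepMod (_ρ : Γ →* Matrix.GeneralLinearGroup (Fin n) K) : Type _ := Fin n → K

namespace RepMod

variable (ρ : Γ →* Matrix.GeneralLinearGroup (Fin n) K)

instance : AddCommGroup (RepMod ρ) := inferInstanceAs (AddCommGroup (Fin n → K))
instance : Module K (RepMod ρ) := inferInstanceAs (Module K (Fin n → K))
instance : Module.Finite K (RepMod ρ) := inferInstanceAs (Module.Finite K (Fin n → K))

/-- Identification of `RepMod ρ` with `Fin n → K`. -/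
def toPi (x : RepMod ρ) : Fin n → K := x

/-- Identification of `Fin n → K` with `RepMod ρ`. -/
def ofPi (x : Fin n → K) : RepMod ρ := x

@[simp] lemma toPi_ofPi (x : Fin n → K) : toPi ρ (ofPi ρ x) = x := rfl
@[simp] lemma ofPi_toPi (x : RepMod ρ) : ofPi ρ (toPi ρ x) = x := rfl
@[simp] lemma toPi_add (x y : RepMod ρ) : toPi ρ (x + y) = toPi ρ x + toPi ρ y := rfl
@[simp] lemma toPi_zero : toPi ρ 0 = 0 := rfl
@[simp] lemma toPi_smulK (c : K) (x : RepMod ρ) : toPi ρ (c • x) = c • toPi ρ x := rfl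

/-- The endomorphism-algebra morphism induced by `ρ`. -/
noncomputable def phiRep : MonoidAlgebra K Γ →ₐ[K] Module.End K (Fin n → K) :=
  (Matrix.toLinAlgEquiv' : Matrix (Fin n) (Fin n) K ≃ₐ[K] _).toAlgHom.comp (psiRep ρ)

noncomputable instance : Module (MonoidAlgebra K Γ) (RepMod ρ) :=
  Module.compHom (Fin n → K) (phiRep ρ).toRingHom

lemma smul_def (a : MonoidAlgebra K Γ) (x : RepMod ρ) :
    toPi ρ (a • x) = (psiRep ρ a) *ᵥ (toPi ρ x) := rfl

instance : IsScalarTower K (MonoidAlgebra K Γ) (RepMod ρ) := by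
  constructor
  intro c a x
  show ofPi ρ ((psiRep ρ (c • a)) *ᵥ (toPi ρ x)) = c • ofPi ρ ((psiRep ρ a) *ᵥ (toPi ρ x))
  rw [map_smul, Matrix.smul_mulVec]
  rfl

lemma single_smul (γ : Γ) (x : RepMod ρ) :
    toPi ρ ((MonoidAlgebra.single γ (1 : K) : MonoidAlgebra K Γ) • x)
      = (ρ γ : Matrix (Fin n) (Fin n) K) *ᵥ (toPi ρ x) := by
  rw [smul_def, psiRep_single]

lemma chp_eq (a : MonoidAlgebra K Γ) :
    chp (K := K) a (RepMod ρ) = (psiRep ρ a).charpoly := by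
  have h1 : (Matrix.toLin' (psiRep ρ a)).charpoly = (psiRep ρ a).charpoly := by
    rw [← LinearMap.charpoly_toMatrix (Matrix.toLin' (psiRep ρ a)) (Pi.basisFun K (Fin n)),
      LinearMap.toMatrix_eq_toMatrix', LinearMap.toMatrix'_toLin']
  rw [← h1, chp]
  -- the two endomorphisms are conjugate under the identification `toPi`
  let e : RepMod ρ ≃ₗ[K] (Fin n → K) :=
    { toFun := toPi ρ
      map_add' := fun _ _ => rfl
      map_smul' := fun _ _ => rfl
      invFun := ofPi ρ
      left_inv := fun _ => rfl
      right_inv := fun _ => rfl }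
  have h2 : Matrix.toLin' (psiRep ρ a) = e.conj (aSmul (K := K) a (RepMod ρ)) := by
    apply LinearMap.ext
    intro x
    show Matrix.toLin' (psiRep ρ a) x = toPi ρ (a • (ofPi ρ x))
    rw [smul_def, Matrix.toLin'_apply, toPi_ofPi]
  rw [h2, LinearEquiv.charpoly_conj]

end RepMod

end RepBridge

section SSBridge

open scoped Matrix

namespace RepMod

variable {K : Type*} [Field K] {Γ : Type*} [Group Γ] {n : ℕ}
variable (ρ : Γ →* Matrix.GeneralLinearGroup (Fin n) K)

lemma isSemisimpleModule (hρ : IsSemisimpleRep ρ) :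
    IsSemisimpleModule (MonoidAlgebra K Γ) (RepMod ρ) := by
  rw [isSemisimpleModule_iff]
  constructor
  intro p
  classical
  let W : Submodule K (Fin n → K) :=
    { carrier := {x : Fin n → K | ofPi ρ x ∈ p}
      add_mem' := fun hx hy => p.add_mem hx hy
      zero_mem' := p.zero_mem
      smul_mem' := fun c x hx => by
        have h := p.smul_mem (algebraMap K (MonoidAlgebra K Γ) c)
          (show ofPi ρ x ∈ p from hx)
        have h2 : (algebraMap K (MonoidAlgebra K Γ) c) • (ofPi ρ x) = c • (ofPi ρ x) :=
          algebraMap_smul _ c (ofPi ρ x)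
        rw [h2] at h
        exact h }
  have hWinv : ∀ γ : Γ, ∀ w ∈ W, (ρ γ : Matrix (Fin n) (Fin n) K) *ᵥ w ∈ W := by
    intro γ w hw
    have h := p.smul_mem (MonoidAlgebra.single γ (1 : K)) (show ofPi ρ w ∈ p from hw)
    have h2 := congrArg (ofPi ρ) (single_smul ρ γ (ofPi ρ w))
    rw [ofPi_toPi, toPi_ofPi] at h2
    rw [h2] at h
    exact h
  obtain ⟨W', hW'inv, hcompl⟩ := hρ W hWinv
  have hsmul : ∀ (a : MonoidAlgebra K Γ) (x : RepMod ρ), toPi ρ x ∈ W' →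
      toPi ρ (a • x) ∈ W' := by
    intro a
    induction a using MonoidAlgebra.induction_linear with
    | zero => intro x _; rw [zero_smul, toPi_zero]; exact W'.zero_mem
    | add f g hf hg =>
      intro x hx
      rw [add_smul, toPi_add]
      exact W'.add_mem (hf x hx) (hg x hx)
    | single γ c =>
      intro x hx
      show toPi ρ ((MonoidAlgebra.single γ c : MonoidAlgebra K Γ) • x) ∈ W'
      have h1 : c • (MonoidAlgebra.single γ (1 : K) : MonoidAlgebra K Γ)
          = MonoidAlgebra.single γ c := by
        rw [MonoidAlgebra.smul_single', mul_one]
      rw [← h1, smul_assoc, toPi_smulK, single_smul]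
      exact W'.smul_mem c (hW'inv γ (toPi ρ x) hx)
  let q : Submodule (MonoidAlgebra K Γ) (RepMod ρ) :=
    { carrier := {x : RepMod ρ | toPi ρ x ∈ W'}
      add_mem' := fun hx hy => W'.add_mem hx hy
      zero_mem' := W'.zero_mem
      smul_mem' := fun a x hx => hsmul a x hx }
  refine ⟨q, ?_, ?_⟩
  · rw [disjoint_iff, Submodule.eq_bot_iff]
    rintro x ⟨hxp, hxq⟩
    exact (Submodule.disjoint_def.mp hcompl.disjoint) (toPi ρ x) hxp hxq
  · rw [codisjoint_iff, eq_top_iff]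
    intro x _
    have hx : toPi ρ x ∈ W ⊔ W' := by rw [hcompl.sup_eq_top]; trivial
    obtain ⟨w, hw, w', hw', hww⟩ := Submodule.mem_sup.mp hx
    have hxe : x = ofPi ρ w + ofPi ρ w' := by
      apply congrArg (ofPi ρ) at hww
      rw [ofPi_toPi] at hww
      exact hww.symm
    rw [hxe]
    exact Submodule.add_mem _ (Submodule.mem_sup_left hw)
      (Submodule.mem_sup_right (by exact hw'))

end RepMod

end SSBridge

section Analytic

open Filter Topology
open scoped Matrix

lemma infiniteK {K : Type*} [NontriviallyNormedField K] : Infinite K := by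
  obtain ⟨x, hx⟩ := NormedField.exists_one_lt_norm K
  refine Infinite.of_injective (fun m : ℕ => x ^ m) fun i j hij => ?_
  have h2 := congrArg (fun y => ‖y‖) hij
  simp only [norm_pow] at h2
  exact (pow_right_strictMono₀ hx).injective h2

lemma charpoly_eval {K : Type*} [Field K] {m : ℕ} (M : Matrix (Fin m) (Fin m) K) (t : K) :
    M.charpoly.eval t = (t • (1 : Matrix (Fin m) (Fin m) K) - M).det := by
  rw [Matrix.charpoly, ← Polynomial.coe_evalRingHom, RingHom.map_det]
  congr 1
  ext i j
  by_cases h : i = j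
  · subst h
    simp [Matrix.charmatrix_apply_eq, Matrix.one_apply, Matrix.sub_apply, Matrix.smul_apply]
  · simp [Matrix.charmatrix_apply_ne _ _ _ h, Matrix.one_apply_ne h, Matrix.sub_apply,
      Matrix.smul_apply, h]

/-- If `B_k → B` and `u_k B_k u_k⁻¹ → C` then `B` and `C` have the same characteristic
polynomial. -/
lemma charpoly_eq_of_conj_tendsto {K : Type*} [NontriviallyNormedField K] {m : ℕ}
    (B C : Matrix (Fin m) (Fin m) K) (Bk : ℕ → Matrix (Fin m) (Fin m) K)
    (u : ℕ → (Matrix (Fin m) (Fin m) K)ˣ)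
    (hB : Tendsto Bk atTop (nhds B))
    (hC : Tendsto (fun k => (u k : Matrix (Fin m) (Fin m) K) * Bk k * ((u k)⁻¹ :
      (Matrix (Fin m) (Fin m) K)ˣ)) atTop (nhds C)) :
    B.charpoly = C.charpoly := by
  haveI : Infinite K := infiniteK
  apply Polynomial.funext
  intro t
  rw [charpoly_eval, charpoly_eval]
  have hcont : Continuous fun X : Matrix (Fin m) (Fin m) K =>
      (t • (1 : Matrix (Fin m) (Fin m) K) - X).det :=
    Continuous.matrix_det (continuous_const.sub continuous_id)
  have h1 : Tendsto (fun k => (t • (1 : Matrix (Fin m) (Fin m) K) - Bk k).det) atTop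
      (nhds ((t • (1 : Matrix (Fin m) (Fin m) K) - B).det)) := (hcont.tendsto B).comp hB
  have h2 : Tendsto (fun k => (t • (1 : Matrix (Fin m) (Fin m) K) -
      ((u k : Matrix (Fin m) (Fin m) K) * Bk k * ((u k)⁻¹ :
        (Matrix (Fin m) (Fin m) K)ˣ))).det) atTop
      (nhds ((t • (1 : Matrix (Fin m) (Fin m) K) - C).det)) := (hcont.tendsto C).comp hC
  have key : ∀ k, (t • (1 : Matrix (Fin m) (Fin m) K) -
      ((u k : Matrix (Fin m) (Fin m) K) * Bk k * ((u k)⁻¹ :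
        (Matrix (Fin m) (Fin m) K)ˣ))).det
      = (t • (1 : Matrix (Fin m) (Fin m) K) - Bk k).det := by
    intro k
    have hconj : (u k : Matrix (Fin m) (Fin m) K) *
        (t • (1 : Matrix (Fin m) (Fin m) K) - Bk k) * ((u k)⁻¹ :
          (Matrix (Fin m) (Fin m) K)ˣ)
        = t • (1 : Matrix (Fin m) (Fin m) K) -
          ((u k : Matrix (Fin m) (Fin m) K) * Bk k * ((u k)⁻¹ :
            (Matrix (Fin m) (Fin m) K)ˣ)) := by
      rw [Matrix.mul_sub, Matrix.sub_mul]
      congr 1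
      rw [Matrix.mul_smul, Matrix.mul_one, Matrix.smul_mul, Units.mul_inv]
    rw [← hconj, Matrix.det_units_conj]
  rw [funext key] at h2
  exact tendsto_nhds_unique h1 h2

end Analytic


section Final

open Filter Topology
open scoped Matrix

/-- Over a local field, two semisimple representations of a finitely generated
group that are not separated by conjugation (there are homomorphisms `ρ_k → ρ` with
`g_k ρ_k g_k⁻¹ → ρ'`) are conjugate. -/
theorem stmt17 {K : Type*} [NontriviallyNormedField K] [ProperSpace K]
    {Γ : Type*} [Group Γ] [Group.FG Γ] {n : ℕ}
    (ρ ρ' : Γ →* Matrix.GeneralLinearGroup (Fin n) K)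
    (hρ : IsSemisimpleRep ρ) (hρ' : IsSemisimpleRep ρ')
    (ρseq : ℕ → (Γ →* Matrix.GeneralLinearGroup (Fin n) K))
    (g : ℕ → Matrix.GeneralLinearGroup (Fin n) K)
    (hconv : ∀ γ : Γ,
      Tendsto (fun k : ℕ => ((ρseq k γ : Matrix (Fin n) (Fin n) K)))
        atTop (nhds ((ρ γ : Matrix (Fin n) (Fin n) K))))
    (hconv' : ∀ γ : Γ,
      Tendsto
        (fun k : ℕ =>
          ((g k * ρseq k γ * (g k)⁻¹ : Matrix.GeneralLinearGroup (Fin n) K) :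
            Matrix (Fin n) (Fin n) K))
        atTop (nhds ((ρ' γ : Matrix (Fin n) (Fin n) K)))) :
    ∃ h : Matrix.GeneralLinearGroup (Fin n) K, ∀ γ : Γ, ρ' γ = h * ρ γ * h⁻¹ := by
  classical
  haveI hss1 := RepMod.isSemisimpleModule ρ hρ
  haveI hss2 := RepMod.isSemisimpleModule ρ' hρ'
  -- equality of characteristic polynomials of all monoid-algebra elements
  have hchar : ∀ a : MonoidAlgebra K Γ,
      chp (K := K) a (RepMod ρ) = chp (K := K) a (RepMod ρ') := by
    intro a
    rw [RepMod.chp_eq, RepMod.chp_eq]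
    set Bk : ℕ → Matrix (Fin n) (Fin n) K :=
      fun k => ∑ γ ∈ a.coeff.support, a.coeff γ • ((ρseq k γ : Matrix (Fin n) (Fin n) K)) with hBk
    have hB : Tendsto Bk atTop (nhds (psiRep ρ a)) := by
      rw [psiRep_apply, Finsupp.sum]
      exact tendsto_finset_sum _ fun γ _ => (hconv γ).const_smul (a.coeff γ)
    have hC : Tendsto (fun k => (g k : Matrix (Fin n) (Fin n) K) * Bk k *
        (((g k)⁻¹ : Matrix.GeneralLinearGroup (Fin n) K) : Matrix (Fin n) (Fin n) K))
        atTop (nhds (psiRep ρ' a)) := by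
      have hrw : ∀ k, (g k : Matrix (Fin n) (Fin n) K) * Bk k *
          (((g k)⁻¹ : Matrix.GeneralLinearGroup (Fin n) K) : Matrix (Fin n) (Fin n) K)
          = ∑ γ ∈ a.coeff.support, a.coeff γ •
            ((g k * ρseq k γ * (g k)⁻¹ : Matrix.GeneralLinearGroup (Fin n) K) :
              Matrix (Fin n) (Fin n) K) := by
        intro k
        rw [hBk, Finset.mul_sum, Finset.sum_mul]
        refine Finset.sum_congr rfl fun γ _ => ?_
        rw [mul_smul_comm, smul_mul_assoc, Units.val_mul, Units.val_mul]
      rw [funext hrw]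
      rw [psiRep_apply, Finsupp.sum]
      exact tendsto_finset_sum _ fun γ _ => (hconv' γ).const_smul (a.coeff γ)
    exact charpoly_eq_of_conj_tendsto _ _ Bk g hB hC
  obtain ⟨e⟩ := core_iso (K := K) (A := MonoidAlgebra K Γ)
    (finrank K (RepMod ρ)) (RepMod ρ) (RepMod ρ') rfl hchar
  -- `K`-linearity of `e` and `e.symm`
  have hEsmul : ∀ (c : K) (x : RepMod ρ), e (c • x) = c • e x := fun c x => by
    rw [← algebraMap_smul (MonoidAlgebra K Γ) c x, map_smul, algebraMap_smul]
  have hEsmul' : ∀ (c : K) (x : RepMod ρ'), e.symm (c • x) = c • e.symm x := fun c x => by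
    rw [← algebraMap_smul (MonoidAlgebra K Γ) c x, map_smul, algebraMap_smul]
  let Elin : (Fin n → K) →ₗ[K] (Fin n → K) :=
    { toFun := fun x => RepMod.toPi ρ' (e (RepMod.ofPi ρ x))
      map_add' := fun x y => by
        show RepMod.toPi ρ' (e (RepMod.ofPi ρ (x + y))) = _
        have h0 : RepMod.ofPi ρ (x + y) = RepMod.ofPi ρ x + RepMod.ofPi ρ y := rfl
        rw [h0, map_add]
        rfl
      map_smul' := fun c x => by
        show RepMod.toPi ρ' (e (RepMod.ofPi ρ (c • x))) = _
        have h0 : RepMod.ofPi ρ (c • x) = c • RepMod.ofPi ρ x := rfl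
        rw [h0, hEsmul]
        rfl }
  let Elin' : (Fin n → K) →ₗ[K] (Fin n → K) :=
    { toFun := fun x => RepMod.toPi ρ (e.symm (RepMod.ofPi ρ' x))
      map_add' := fun x y => by
        show RepMod.toPi ρ (e.symm (RepMod.ofPi ρ' (x + y))) = _
        have h0 : RepMod.ofPi ρ' (x + y) = RepMod.ofPi ρ' x + RepMod.ofPi ρ' y := rfl
        rw [h0, map_add]
        rfl
      map_smul' := fun c x => by
        show RepMod.toPi ρ (e.symm (RepMod.ofPi ρ' (c • x))) = _
        have h0 : RepMod.ofPi ρ' (c • x) = c • RepMod.ofPi ρ' x := rfl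
        rw [h0, hEsmul']
        rfl }
  have hcomp1 : Elin ∘ₗ Elin' = LinearMap.id := by
    apply LinearMap.ext
    intro x
    simp only [LinearMap.comp_apply, LinearMap.coe_mk, AddHom.coe_mk, LinearMap.id_apply,
      Elin, Elin']
    rw [RepMod.ofPi_toPi, LinearEquiv.apply_symm_apply, RepMod.toPi_ofPi]
  have hcomp2 : Elin' ∘ₗ Elin = LinearMap.id := by
    apply LinearMap.ext
    intro x
    simp only [LinearMap.comp_apply, LinearMap.coe_mk, AddHom.coe_mk, LinearMap.id_apply,
      Elin, Elin']
    rw [RepMod.ofPi_toPi, LinearEquiv.symm_apply_apply, RepMod.toPi_ofPi]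
  have hmul1 : LinearMap.toMatrix' Elin * LinearMap.toMatrix' Elin' = 1 := by
    rw [← LinearMap.toMatrix'_comp, hcomp1, LinearMap.toMatrix'_id]
  have hmul2 : LinearMap.toMatrix' Elin' * LinearMap.toMatrix' Elin = 1 := by
    rw [← LinearMap.toMatrix'_comp, hcomp2, LinearMap.toMatrix'_id]
  refine ⟨⟨LinearMap.toMatrix' Elin, LinearMap.toMatrix' Elin', hmul1, hmul2⟩, fun γ => ?_⟩
  -- the intertwining relation
  have hint : ∀ x : Fin n → K,
      Elin ((ρ γ : Matrix (Fin n) (Fin n) K) *ᵥ x)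
        = (ρ' γ : Matrix (Fin n) (Fin n) K) *ᵥ (Elin x) := by
    intro x
    show RepMod.toPi ρ' (e (RepMod.ofPi ρ ((ρ γ : Matrix (Fin n) (Fin n) K) *ᵥ x)))
      = (ρ' γ : Matrix (Fin n) (Fin n) K) *ᵥ (RepMod.toPi ρ' (e (RepMod.ofPi ρ x)))
    have h1 : RepMod.ofPi ρ ((ρ γ : Matrix (Fin n) (Fin n) K) *ᵥ x)
        = (MonoidAlgebra.single γ (1 : K) : MonoidAlgebra K Γ) • RepMod.ofPi ρ x := by
      have := RepMod.single_smul ρ γ (RepMod.ofPi ρ x)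
      rw [RepMod.toPi_ofPi] at this
      have h2 := congrArg (RepMod.ofPi ρ) this
      rw [RepMod.ofPi_toPi] at h2
      exact h2.symm
    rw [h1, map_smul]
    exact RepMod.single_smul ρ' γ (e (RepMod.ofPi ρ x))
  have hmat : LinearMap.toMatrix' Elin * (ρ γ : Matrix (Fin n) (Fin n) K)
      = (ρ' γ : Matrix (Fin n) (Fin n) K) * LinearMap.toMatrix' Elin := by
    have hcompeq : Elin ∘ₗ Matrix.toLin' (ρ γ : Matrix (Fin n) (Fin n) K)
        = Matrix.toLin' (ρ' γ : Matrix (Fin n) (Fin n) K) ∘ₗ Elin := by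
      apply LinearMap.ext
      intro x
      simp only [LinearMap.comp_apply, Matrix.toLin'_apply]
      exact hint x
    have := congrArg LinearMap.toMatrix' hcompeq
    rwa [LinearMap.toMatrix'_comp, LinearMap.toMatrix'_comp, LinearMap.toMatrix'_toLin',
      LinearMap.toMatrix'_toLin'] at this
  apply Units.ext
  show (ρ' γ : Matrix (Fin n) (Fin n) K)
    = LinearMap.toMatrix' Elin * (ρ γ : Matrix (Fin n) (Fin n) K) * LinearMap.toMatrix' Elin'
  rw [hmat, mul_assoc, hmul1, mul_one]

end Final
end
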